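/- For any countably infinite subset X of [0,1] there exists a subset Y of [0,1] such that: Y is dense in [0,1], Y is uncountable, Y is invariant under the tent map T (i.e. T(Y) ⊆ Y), Y is a 1-scrambled set for T, every point of Y is a transitive point of T, and for every x ∈ X and every y ∈ Y one has limsup_{n→∞} |Tⁿ(x) − Tⁿ(y)| ≥ 1/2 and liminf_{n→∞} |Tⁿ(x) − Tⁿ(y)| = 0. -/

import Mathlib

open Filter

/-- The tent map `T(x) = 1 - |2x - 1|`. -/
noncomputable def tentMap (x : ℝ) : ℝ := 1 - |2 * x - 1|

namespace TentAux


lemma tent_left {x : ℝ} (h0 : 0 ≤ x) (h1 : x ≤ 1/2) : tentMap x = 2 * x := by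
  unfold tentMap; rw [abs_of_nonpos (by linarith)]; ring

lemma tent_right {x : ℝ} (h0 : 1/2 ≤ x) (h1 : x ≤ 1) : tentMap x = 2 - 2 * x := by
  unfold tentMap; rw [abs_of_nonneg (by linarith)]; ring

lemma tent_mem {x : ℝ} (h : x ∈ Set.Icc (0:ℝ) 1) : tentMap x ∈ Set.Icc (0:ℝ) 1 := by
  obtain ⟨h0, h1⟩ := h
  rcases le_or_gt x (1/2) with h | h
  · rw [tent_left h0 h]; constructor <;> linarith
  · rw [tent_right h.le h1]; constructor <;> linarith

lemma tent_iter_mem {x : ℝ} (h : x ∈ Set.Icc (0:ℝ) 1) (n : ℕ) :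
    tentMap^[n] x ∈ Set.Icc (0:ℝ) 1 := by
  induction n with
  | zero => exact h
  | succ n ih => rw [Function.iterate_succ_apply']; exact tent_mem ih

lemma tent_lip (u v : ℝ) : |tentMap u - tentMap v| ≤ 2 * |u - v| := by
  unfold tentMap
  have h1 : (1 - |2*u-1|) - (1 - |2*v-1|) = |2*v-1| - |2*u-1| := by ring
  rw [h1]
  calc |(|2*v-1| - |2*u-1|)| ≤ |(2*v-1) - (2*u-1)| := abs_abs_sub_abs_le_abs_sub _ _
    _ = |2*(v-u)| := by ring_nf
    _ = 2*|v-u| := by rw [abs_mul]; norm_num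
    _ = 2*|u-v| := by rw [abs_sub_comm]

lemma fract_two_fract (z : ℝ) : Int.fract (2 * Int.fract z) = Int.fract (2 * z) := by
  have : 2 * Int.fract z = 2 * z - (2 * ⌊z⌋ : ℤ) := by
    unfold Int.fract; push_cast; ring
  rw [this, Int.fract_sub_intCast]

lemma tent_tent {u : ℝ} (h0 : 0 ≤ u) (h1 : u ≤ 1) :
    tentMap (tentMap u) = tentMap (Int.fract (2 * u)) := by
  rcases lt_or_ge u (1/2) with h | h
  · rw [tent_left h0 h.le, Int.fract_eq_self.mpr ⟨by linarith, by linarith⟩]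
  · rcases eq_or_lt_of_le h1 with h1 | h1
    · subst h1; norm_num [tentMap]
    · have hf : Int.fract (2*u) = 2*u - 1 := by
        rw [show (2*u : ℝ) = (2*u - 1) + ((1:ℤ):ℝ) by push_cast; ring, Int.fract_add_intCast,
          Int.fract_eq_self.mpr ⟨by linarith, by linarith⟩]
        push_cast; ring
      rw [hf, tent_right h h1.le]
      unfold tentMap
      rw [show 2*(2*u-1) - 1 = -(2*(2-2*u) - 1) by ring, abs_neg]

/-- Iterate formula: `T^[n+1] x = T (fract (2^n x))` for `x ∈ [0,1]`. -/
lemma tent_iter_formula {x : ℝ} (h : x ∈ Set.Icc (0:ℝ) 1) (n : ℕ) :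
    tentMap^[n+1] x = tentMap (Int.fract (2^n * x)) := by
  induction n with
  | zero =>
    rcases eq_or_lt_of_le h.2 with h1 | h1
    · subst h1; norm_num [tentMap]
    · simp [Int.fract_eq_self.mpr ⟨h.1, h1⟩]
  | succ n ih =>
    rw [Function.iterate_succ_apply', ih]
    have hf : Int.fract (2^n * x) ∈ Set.Icc (0:ℝ) 1 := ⟨Int.fract_nonneg _, (Int.fract_lt_one _).le⟩
    rw [tent_tent hf.1 hf.2, fract_two_fract, show (2:ℝ)^(n+1) * x = 2 * (2^n * x) by ring]


/-- real value of a bit -/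
def bv (b : Bool) : ℝ := if b then 1 else 0

lemma bv_nonneg (b : Bool) : 0 ≤ bv b := by cases b <;> simp [bv]
lemma bv_le_one (b : Bool) : bv b ≤ 1 := by cases b <;> simp [bv]



/-- binary digit of a real number -/
noncomputable def xdig (x : ℝ) (r : ℕ) : Bool := decide (⌊2^(r+1) * x⌋ = 2*⌊2^r * x⌋ + 1)

lemma floor_double (z : ℝ) : ⌊2*z⌋ = 2*⌊z⌋ ∨ ⌊2*z⌋ = 2*⌊z⌋ + 1 := by
  have h1 : (⌊z⌋ : ℝ) ≤ z := Int.floor_le z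
  have h2 : z < ⌊z⌋ + 1 := Int.lt_floor_add_one z
  have l1 : (2*⌊z⌋ : ℤ) ≤ ⌊2*z⌋ := by
    apply Int.le_floor.mpr; push_cast; linarith
  have l2 : ⌊2*z⌋ < 2*⌊z⌋ + 2 := by
    apply Int.floor_lt.mpr; push_cast; linarith
  omega

lemma bv_xdig (x : ℝ) (r : ℕ) :
    (bv (xdig x r) : ℝ) = (⌊2^(r+1) * x⌋ : ℝ) - 2*(⌊2^r * x⌋ : ℝ) := by
  have := floor_double (2^r * x)
  rw [show 2 * (2^r * x) = 2^(r+1) * x by ring] at this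
  unfold bv xdig
  rcases this with h | h <;> rw [h] <;> push_cast <;> simp [h] <;> push_cast <;> ring

/-- one-step digit expansion of fract -/
lemma fract_step (x : ℝ) (r : ℕ) :
    Int.fract (2^r * x) = bv (xdig x r) * 2⁻¹ + 2⁻¹ * Int.fract (2^(r+1) * x) := by
  rw [bv_xdig]
  unfold Int.fract
  have : (2:ℝ)^(r+1) * x = 2 * (2^r * x) := by ring
  rw [this]; ring

/-- digit expansion of fract to depth J -/
lemma fract_expand (x : ℝ) (c : ℕ) (J : ℕ) :
    Int.fract (2^c * x)
      = (∑ j ∈ Finset.range J, bv (xdig x (c+j)) * 2⁻¹^(j+1))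
        + 2⁻¹^J * Int.fract (2^(c+J) * x) := by
  induction J with
  | zero => simp
  | succ J ih =>
    rw [ih, Finset.sum_range_succ, fract_step x (c+J), show c + J + 1 = c + (J+1) by ring]
    ring



lemma geo_summable : Summable (fun j : ℕ => (2⁻¹:ℝ)^(j+1)) := by
  have := (summable_geometric_of_lt_one (by norm_num : (0:ℝ) ≤ 2⁻¹)
    (by norm_num : (2:ℝ)⁻¹ < 1)).mul_left 2⁻¹
  apply this.congr; intro j; rw [pow_succ]; ring

noncomputable def Gb (b : ℕ → Bool) (p : ℕ) : ℝ := ∑' j : ℕ, bv (b (p+j)) * 2⁻¹^(j+1)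

lemma Gb_summable (b : ℕ → Bool) (p : ℕ) :
    Summable (fun j : ℕ => bv (b (p+j)) * 2⁻¹^(j+1)) := by
  apply Summable.of_nonneg_of_le
    (fun j => mul_nonneg (bv_nonneg _) (by positivity)) (fun j => ?_) geo_summable
  exact (mul_le_mul_of_nonneg_right (bv_le_one _) (by positivity)).trans_eq (one_mul _)

lemma Gb_nonneg (b : ℕ → Bool) (p : ℕ) : 0 ≤ Gb b p :=
  tsum_nonneg (fun j => mul_nonneg (bv_nonneg _) (by positivity))

lemma tsum_half_pow : ∑' j : ℕ, (2⁻¹:ℝ)^(j+1) = 1 := by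
  have h := tsum_geometric_of_lt_one (by norm_num : (0:ℝ) ≤ 2⁻¹) (by norm_num : (2:ℝ)⁻¹ < 1)
  have h2 : ∑' j : ℕ, (2⁻¹:ℝ)^(j+1) = 2⁻¹ * ∑' j : ℕ, (2⁻¹:ℝ)^j := by
    rw [← tsum_mul_left]; congr 1; ext j; rw [pow_succ]; ring
  rw [h2, h]; norm_num

lemma Gb_le_one (b : ℕ → Bool) (p : ℕ) : Gb b p ≤ 1 := by
  rw [← tsum_half_pow]
  exact Summable.tsum_le_tsum
    (fun j => (mul_le_mul_of_nonneg_right (bv_le_one _) (by positivity)).trans_eq (one_mul _))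
    (Gb_summable b p) geo_summable

lemma Gb_rec (b : ℕ → Bool) (p : ℕ) :
    Gb b p = bv (b p) * 2⁻¹ + 2⁻¹ * Gb b (p+1) := by
  unfold Gb
  rw [Summable.tsum_eq_zero_add (Gb_summable b p)]
  congr 1
  · simp
  · rw [← tsum_mul_left]
    congr 1; ext j
    rw [show p + (j+1) = (p+1) + j by ring, pow_succ]
    ring

/-- expansion of `Gb` to depth `J` -/
lemma Gb_expand (b : ℕ → Bool) (p J : ℕ) :
    Gb b p = (∑ j ∈ Finset.range J, bv (b (p+j)) * 2⁻¹^(j+1)) + 2⁻¹^J * Gb b (p+J) := by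
  induction J with
  | zero => simp
  | succ J ih =>
    rw [ih, Gb_rec b (p+J), Finset.sum_range_succ, show p+(J+1) = (p+J)+1 by ring]
    ring

lemma Gb_zeros {b : ℕ → Bool} {p J : ℕ} (h : ∀ j, j < J → b (p+j) = false) :
    Gb b p ≤ 2⁻¹^J := by
  rw [Gb_expand b p J]
  have hs : ∑ j ∈ Finset.range J, bv (b (p+j)) * 2⁻¹^(j+1) = 0 := by
    apply Finset.sum_eq_zero; intro j hj
    rw [h j (Finset.mem_range.mp hj)]; simp [bv]
  rw [hs, zero_add]
  calc 2⁻¹^J * Gb b (p+J) ≤ 2⁻¹^J * 1 :=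
    mul_le_mul_of_nonneg_left (Gb_le_one _ _) (by positivity)
  _ = 2⁻¹^J := mul_one _

lemma Gb_one {b : ℕ → Bool} {p J : ℕ} (hp : b p = true)
    (h : ∀ j, 1 ≤ j → j ≤ J → b (p+j) = false) :
    2⁻¹ ≤ Gb b p ∧ Gb b p ≤ 2⁻¹ + 2⁻¹^(J+1) := by
  have h0 : Gb b p = bv (b p) * 2⁻¹ + 2⁻¹ * Gb b (p+1) := by rw [Gb_rec]
  have hz : Gb b (p+1) ≤ 2⁻¹^J := Gb_zeros (fun j hj => by
    rw [show p + 1 + j = p + (1+j) by ring]; exact h (1+j) (by omega) (by omega))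
  have hg0 := Gb_nonneg b (p+1)
  rw [h0, hp]
  simp only [bv, if_true]
  constructor
  · nlinarith
  · rw [pow_succ]; nlinarith


/-- if the digits of `b` from `p` match the binary digits of `x` from `c`, the tails are close -/
lemma Gb_match {b : ℕ → Bool} {x : ℝ} {p c J : ℕ}
    (h : ∀ j, j < J → b (p+j) = xdig x (c+j)) :
    |Gb b p - Int.fract (2^c * x)| ≤ 2⁻¹^J := by
  rw [Gb_expand b p J, fract_expand x c J]
  have hsum : ∑ j ∈ Finset.range J, bv (b (p+j)) * 2⁻¹^(j+1)
      = ∑ j ∈ Finset.range J, bv (xdig x (c+j)) * 2⁻¹^(j+1) := by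
    apply Finset.sum_congr rfl
    intro j hj
    rw [h j (Finset.mem_range.mp hj)]
  rw [hsum]
  have e1 : 0 ≤ Gb b (p+J) := Gb_nonneg _ _
  have e2 : Gb b (p+J) ≤ 1 := Gb_le_one _ _
  have e3 : 0 ≤ Int.fract (2^(c+J) * x) := Int.fract_nonneg _
  have e4 : Int.fract (2^(c+J) * x) ≤ 1 := (Int.fract_lt_one _).le
  have hp : (0:ℝ) < 2⁻¹^J := by positivity
  rw [abs_le]
  constructor <;> nlinarith

lemma Gb_lt_one {b : ℕ → Bool} {p q : ℕ} (hpq : p ≤ q) (hq : b q = false) :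
    Gb b p < 1 := by
  set J := q - p + 1 with hJ
  have hqp : q = p + (q - p) := by omega
  rw [Gb_expand b p J]
  have hterm : ∑ j ∈ Finset.range J, bv (b (p+j)) * 2⁻¹^(j+1)
      ≤ (∑ j ∈ Finset.range J, (2⁻¹:ℝ)^(j+1)) - 2⁻¹^J := by
    have : ∀ j ∈ Finset.range J, bv (b (p+j)) * 2⁻¹^(j+1) ≤ (2⁻¹:ℝ)^(j+1) :=
      fun j _ => (mul_le_mul_of_nonneg_right (bv_le_one _) (by positivity)).trans_eq (one_mul _)
    have hqmem : (q - p) ∈ Finset.range J := Finset.mem_range.mpr (by omega)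
    have hqzero : bv (b (p + (q-p))) * 2⁻¹^((q-p)+1) = 0 := by
      rw [← hqp, hq]; simp [bv]
    calc ∑ j ∈ Finset.range J, bv (b (p+j)) * 2⁻¹^(j+1)
        = ∑ j ∈ Finset.range J \ {q-p}, bv (b (p+j)) * 2⁻¹^(j+1) := by
          rw [Finset.sum_eq_sum_sdiff_singleton_add hqmem, hqzero, add_zero]
      _ ≤ ∑ j ∈ Finset.range J \ {q-p}, (2⁻¹:ℝ)^(j+1) := by
          apply Finset.sum_le_sum
          intro j hj
          exact this j (Finset.mem_sdiff.mp hj).1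
      _ = (∑ j ∈ Finset.range J, (2⁻¹:ℝ)^(j+1)) - 2⁻¹^((q-p)+1) := by
          rw [Finset.sum_eq_sum_sdiff_singleton_add hqmem]; ring
      _ ≤ (∑ j ∈ Finset.range J, (2⁻¹:ℝ)^(j+1)) - 2⁻¹^J := by
          have : (2⁻¹:ℝ)^J ≤ 2⁻¹^((q-p)+1) := le_of_eq (by rw [hJ])
          linarith
  have hgeo : ∑ j ∈ Finset.range J, (2⁻¹:ℝ)^(j+1) = 1 - 2⁻¹^J := by
    clear hterm hJ
    induction J with
    | zero => simp
    | succ J ih => rw [Finset.sum_range_succ, ih, pow_succ]; ring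
  have hG : Gb b (p+J) ≤ 1 := Gb_le_one _ _
  have hp2 : (0:ℝ) < 2⁻¹^J := by positivity
  nlinarith


noncomputable def yb (b : ℕ → Bool) : ℝ := ∑' q : ℕ, bv (b q) * 2⁻¹^(q+1)

lemma yb_eq_Gb_zero (b : ℕ → Bool) : yb b = Gb b 0 := by
  unfold yb Gb
  congr 1; ext q; rw [Nat.zero_add]

lemma yb_mem (b : ℕ → Bool) : yb b ∈ Set.Icc (0:ℝ) 1 := by
  rw [yb_eq_Gb_zero]; exact ⟨Gb_nonneg _ _, Gb_le_one _ _⟩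

lemma fract_pow_yb {b : ℕ → Bool} (hzero : ∀ p, ∃ q, p ≤ q ∧ b q = false) (p : ℕ) :
    Int.fract (2^p * yb b) = Gb b p := by
  have hsum : Summable (fun q : ℕ => (2:ℝ)^p * (bv (b q) * 2⁻¹^(q+1))) :=
    (Gb_summable b 0).congr (fun q => by rw [Nat.zero_add]) |>.mul_left _
  have hmul : (2:ℝ)^p * yb b = ∑' q : ℕ, (2:ℝ)^p * (bv (b q) * 2⁻¹^(q+1)) := by
    rw [yb, tsum_mul_left]
  have hsplit := Summable.sum_add_tsum_nat_add (f := fun q : ℕ => (2:ℝ)^p * (bv (b q) * 2⁻¹^(q+1))) p hsum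
  rw [hmul, ← hsplit]
  have htail : ∑' q : ℕ, (2:ℝ)^p * (bv (b (q+p)) * 2⁻¹^(q+p+1)) = Gb b p := by
    unfold Gb
    congr 1; ext q
    have h1 : (2:ℝ)^p * 2⁻¹^(q+p+1) = 2⁻¹^(q+1) := by
      rw [show q+p+1 = p + (q+1) by ring, pow_add, inv_pow, inv_pow, ← mul_assoc]
      rw [mul_inv_cancel₀ (by positivity)]
      ring
    rw [show p + q = q + p by ring, ← mul_assoc, mul_comm ((2:ℝ)^p) (bv _), mul_assoc, h1]
  have hfront : ∑ q ∈ Finset.range p, (2:ℝ)^p * (bv (b q) * 2⁻¹^(q+1))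
      = ((∑ q ∈ Finset.range p, if b q then (2:ℤ)^(p-1-q) else 0 : ℤ) : ℝ) := by
    push_cast
    apply Finset.sum_congr rfl
    intro q hq
    have hqp : q < p := Finset.mem_range.mp hq
    have hpe : (2:ℝ)^p = 2^(p-1-q) * 2^(q+1) := by
      rw [← pow_add, show (p-1-q) + (q+1) = p by omega]
    cases hb : b q
    · simp [bv]
    · simp only [bv, if_true]
      rw [hpe, inv_pow]
      field_simp
  rw [htail, hfront, Int.fract_intCast_add]
  apply Int.fract_eq_self.mpr
  refine ⟨Gb_nonneg _ _, ?_⟩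
  obtain ⟨q, hq1, hq2⟩ := hzero p
  exact Gb_lt_one hq1 hq2

/-! ### The construction -/

def tty (t : ℕ) : ℕ := (Nat.unpair t).1 % 5
def tu (t : ℕ) : ℕ := (Nat.unpair ((Nat.unpair t).1 / 5)).1
def tv (t : ℕ) : ℕ := (Nat.unpair ((Nat.unpair t).1 / 5)).2

lemma tty_spec {t u v ty : ℕ} (hty : ty < 5) (hc : (Nat.unpair t).1 = 5 * Nat.pair u v + ty) :
    tty t = ty ∧ tu t = u ∧ tv t = v := by
  unfold tty tu tv
  rw [hc, Nat.mul_add_div (by norm_num), Nat.mul_add_mod, Nat.mod_eq_of_lt hty,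
    Nat.div_eq_of_lt hty, Nat.add_zero, Nat.unpair_pair]
  exact ⟨rfl, rfl, rfl⟩

/-- content of stage `t` at global position `q` (only used for `2*4^t ≤ q < 3*4^t`) -/
noncomputable def content (e : ℕ → ℝ) (α : ℕ → Bool) (t q : ℕ) : Bool :=
  match tty t with
  | 0 => xdig (((Nat.unpair (tu t)).1 : ℝ) / 2^((Nat.unpair (tu t)).2)) (q - 2*4^t)
  | 1 => decide (q = 2*4^t)
  | 2 => decide (q = (if α (tu t) then 3*4^t - 1 else 2*4^t))
  | 3 => decide (q = 2*4^t) && decide (tentMap^[2*4^t + 1 - tv t] (e (tu t)) ≤ 1/2)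
  | _ => xdig (e (tu t)) (q - tv t)

/-- the digit sequence of the point `y_α` -/
noncomputable def digs (e : ℕ → ℝ) (α : ℕ → Bool) (q : ℕ) : Bool :=
  let t := Nat.log 4 q
  if t = 0 then false
  else if q < 2*4^t then false
  else if 3*4^t ≤ q then false
  else content e α t q

lemma log4_eq {t q : ℕ} (h1 : 4^t ≤ q) (h2 : q < 4^(t+1)) : Nat.log 4 q = t :=
  Nat.log_eq_of_pow_le_of_lt_pow h1 h2

lemma digs_content {e α t q} (ht : 1 ≤ t) (h1 : 2*4^t ≤ q) (h2 : q < 3*4^t) :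
    digs e α q = content e α t q := by
  have hl : Nat.log 4 q = t := log4_eq (by omega) (by rw [pow_succ]; omega)
  unfold digs
  rw [hl]
  simp only [if_neg (by omega : ¬ t = 0), if_neg (by omega : ¬ q < 2*4^t),
    if_neg (by omega : ¬ 3*4^t ≤ q)]

lemma digs_pad_front {e α t q} (h1 : 4^t ≤ q) (h2 : q < 2*4^t) :
    digs e α q = false := by
  rcases Nat.eq_zero_or_pos t with ht | ht
  · subst ht
    unfold digs
    have : Nat.log 4 q = 0 := by
      apply Nat.log_eq_zero_iff.mpr; left; omega
    rw [this]; simp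
  · have hl : Nat.log 4 q = t := log4_eq h1 (by rw [pow_succ]; omega)
    unfold digs
    rw [hl]
    simp only [if_neg (by omega : ¬ t = 0), if_pos h2]

lemma digs_pad_back {e α t q} (h1 : 3*4^t ≤ q) (h2 : q < 4^(t+1)) :
    digs e α q = false := by
  have h4 : (1:ℕ) ≤ 4^t := Nat.one_le_two_pow.trans (Nat.pow_le_pow_left (by norm_num) t)
  have hl : Nat.log 4 q = t := log4_eq (by omega) h2
  unfold digs
  rcases Nat.eq_zero_or_pos t with ht | ht
  · rw [hl, ht]; simp
  · rw [hl]
    simp only [if_neg (by omega : ¬ t = 0), if_neg (by omega : ¬ q < 2*4^t), if_pos h1]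

lemma digs_zero_exists (e : ℕ → ℝ) (α : ℕ → Bool) :
    ∀ p, ∃ q, p ≤ q ∧ digs e α q = false := by
  intro p
  refine ⟨3*4^(p+1), ?_, digs_pad_back (le_refl _) ?_⟩
  · have : p + 1 < 4^(p+1) := Nat.lt_pow_self (by norm_num)
    omega
  · have h0 : 0 < (4:ℕ)^(p+1) := Nat.pow_pos (by norm_num)
    rw [pow_succ 4 (p+1)]
    omega

/-- the point `y_α` -/
noncomputable def ypt (e : ℕ → ℝ) (α : ℕ → Bool) : ℝ := yb (digs e α)

lemma ypt_mem (e : ℕ → ℝ) (α : ℕ → Bool) : ypt e α ∈ Set.Icc (0:ℝ) 1 := yb_mem _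

/-- orbit formula -/
lemma orbit_formula (e : ℕ → ℝ) (α : ℕ → Bool) {m p : ℕ} (hmp : m ≤ p) :
    tentMap^[p+1-m] (tentMap^[m] (ypt e α)) = tentMap (Gb (digs e α) p) := by
  unfold ypt
  rw [← Function.iterate_add_apply, show (p+1-m) + m = p + 1 by omega,
    tent_iter_formula (yb_mem _) p, fract_pow_yb (digs_zero_exists e α) p]

lemma exists_stage (c K : ℕ) : ∃ t, K ≤ t ∧ (Nat.unpair t).1 = c :=
  ⟨Nat.pair c K, Nat.right_le_pair _ _, by simp⟩

lemma pow4_big {t : ℕ} (ht : 2 ≤ t) : 3*t + 9 ≤ 4^t := by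
  induction t with
  | zero => omega
  | succ t ih =>
    rcases Nat.lt_or_ge t 2 with h | h
    · interval_cases t <;> simp_all
    · have := ih h
      have h4 : (4:ℕ)^t ≥ 1 := Nat.one_le_two_pow.trans (Nat.pow_le_pow_left (by norm_num) t)
      rw [pow_succ]; omega

lemma le_pow4 (t : ℕ) : t ≤ 4^t := (Nat.lt_pow_self (by norm_num) : t < 4^t).le

section ContentLemmas
variable {e : ℕ → ℝ} {α : ℕ → Bool} {t u v q : ℕ}

lemma content_trans (hc : (Nat.unpair t).1 = 5 * Nat.pair u v + 0) :
    content e α t q = xdig (((Nat.unpair u).1 : ℝ) / 2^((Nat.unpair u).2)) (q - 2*4^t) := by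
  obtain ⟨h1, h2, h3⟩ := tty_spec (by norm_num) hc
  unfold content
  rw [h1, h2]; rfl

lemma content_same (hc : (Nat.unpair t).1 = 5 * Nat.pair u v + 1) :
    content e α t q = decide (q = 2*4^t) := by
  obtain ⟨h1, h2, h3⟩ := tty_spec (by norm_num) hc
  unfold content
  rw [h1]; rfl

lemma content_code (hc : (Nat.unpair t).1 = 5 * Nat.pair u v + 2) :
    content e α t q = decide (q = if α u then 3*4^t - 1 else 2*4^t) := by
  obtain ⟨h1, h2, h3⟩ := tty_spec (by norm_num) hc
  unfold content
  rw [h1, h2]; rfl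

lemma content_far (hc : (Nat.unpair t).1 = 5 * Nat.pair u v + 3) :
    content e α t q
      = (decide (q = 2*4^t) && decide (tentMap^[2*4^t + 1 - v] (e u) ≤ 1/2)) := by
  obtain ⟨h1, h2, h3⟩ := tty_spec (by norm_num) hc
  unfold content
  rw [h1, h2, h3]; rfl

lemma content_copy (hc : (Nat.unpair t).1 = 5 * Nat.pair u v + 4) :
    content e α t q = xdig (e u) (q - v) := by
  obtain ⟨h1, h2, h3⟩ := tty_spec (by norm_num) hc
  unfold content
  rw [h1, h2, h3]; rfl

end ContentLemmas

/-! ### helper estimates -/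

lemma tval_one {b : ℕ → Bool} {p J : ℕ} (hJ : 1 ≤ J) (hp : b p = true)
    (hz : ∀ j, 1 ≤ j → j ≤ J → b (p+j) = false) :
    1 - 2⁻¹^J ≤ tentMap (Gb b p) ∧ tentMap (Gb b p) ≤ 1 := by
  obtain ⟨h1, h2⟩ := Gb_one hp hz
  have hJ2 : (2⁻¹:ℝ)^(J+1) ≤ 2⁻¹ := by
    calc (2⁻¹:ℝ)^(J+1) ≤ 2⁻¹^1 := pow_le_pow_of_le_one (by norm_num) (by norm_num) (by omega)
    _ = 2⁻¹ := pow_one _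
  have hb1 : Gb b p ≤ 1 := by linarith
  rw [tent_right (by linarith) hb1]
  constructor <;> [skip; skip] <;> nlinarith [pow_nonneg (by norm_num : (0:ℝ) ≤ 2⁻¹) J, pow_succ (2⁻¹:ℝ) J]

lemma tval_zero {b : ℕ → Bool} {p J : ℕ} (hJ : 1 ≤ J)
    (hz : ∀ j, j < J → b (p+j) = false) :
    0 ≤ tentMap (Gb b p) ∧ tentMap (Gb b p) ≤ 2 * 2⁻¹^J := by
  have h1 := Gb_zeros hz
  have h0 := Gb_nonneg b p
  have hJ2 : (2⁻¹:ℝ)^J ≤ 2⁻¹ := by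
    calc (2⁻¹:ℝ)^J ≤ 2⁻¹^1 := pow_le_pow_of_le_one (by norm_num) (by norm_num) (by omega)
    _ = 2⁻¹ := pow_one _
  rw [tent_left h0 (by linarith)]
  constructor <;> linarith

lemma limsup_ge_of_freq {f : ℕ → ℝ} {c : ℝ} (hb : ∀ n, f n ≤ 1)
    (h : ∀ ε : ℝ, 0 < ε → ∀ K : ℕ, ∃ k, K ≤ k ∧ c - ε ≤ f k) :
    c ≤ Filter.limsup f Filter.atTop := by
  have key : ∀ ε : ℝ, 0 < ε → c - ε ≤ Filter.limsup f Filter.atTop := by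
    intro ε hε
    apply le_limsup_of_frequently_le _ (isBoundedUnder_of ⟨1, hb⟩)
    rw [Filter.frequently_atTop]
    intro K
    obtain ⟨k, hk1, hk2⟩ := h ε hε K
    exact ⟨k, hk1, hk2⟩
  refine le_of_forall_pos_le_add (fun ε hε => ?_)
  have := key ε hε
  linarith

lemma liminf_eq_zero_of_freq {f : ℕ → ℝ} (h0 : ∀ n, 0 ≤ f n) (hb : ∀ n, f n ≤ 1)
    (h : ∀ ε : ℝ, 0 < ε → ∀ K : ℕ, ∃ k, K ≤ k ∧ f k ≤ ε) :
    Filter.liminf f Filter.atTop = 0 := by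
  have hup : ∀ ε : ℝ, 0 < ε → Filter.liminf f Filter.atTop ≤ ε := by
    intro ε hε
    apply liminf_le_of_frequently_le _ (isBoundedUnder_of ⟨0, h0⟩)
    rw [Filter.frequently_atTop]
    intro K
    obtain ⟨k, hk1, hk2⟩ := h ε hε K
    exact ⟨k, hk1, hk2⟩
  have hlow : (0:ℝ) ≤ Filter.liminf f Filter.atTop := by
    apply le_liminf_of_le
    · exact (isBoundedUnder_of ⟨1, hb⟩).isCoboundedUnder_ge
    · exact Filter.Eventually.of_forall h0
  have : Filter.liminf f Filter.atTop ≤ 0 :=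
    le_of_forall_pos_le_add (fun ε hε => by linarith [hup ε hε])
  linarith

lemma exists_pow_small (ε : ℝ) (hε : 0 < ε) : ∃ N : ℕ, ∀ t, N ≤ t → (2⁻¹:ℝ)^t ≤ ε := by
  obtain ⟨N, hN⟩ := exists_pow_lt_of_lt_one hε (by norm_num : (2⁻¹:ℝ) < 1)
  exact ⟨N, fun t ht =>
    (pow_le_pow_of_le_one (by norm_num) (by norm_num) ht).trans hN.le⟩

lemma exists_mod {kp : ℕ} (hkp : 0 < kp) (j0 a : ℕ) (hj : j0 ≤ a) :
    ∃ k, a ≤ k ∧ k < a + kp ∧ ∃ l, k = j0 + kp * l := by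
  set x := a - j0 with hx
  set q := (x + kp - 1)/kp with hq
  have hdm : kp * q + (x + kp - 1) % kp = x + kp - 1 := by
    rw [hq]; exact Nat.div_add_mod _ _
  have hr : (x + kp - 1) % kp < kp := Nat.mod_lt _ hkp
  refine ⟨j0 + kp * q, by omega, by omega, q, rfl⟩

/-! ### block digit lemmas -/

section Blocks
variable {e : ℕ → ℝ} {α : ℕ → Bool} {t : ℕ}

/-- a stage whose content has a single `1` at `pos` -/
lemma digs_one_block (ht : 1 ≤ t) {pos : ℕ} (hpos1 : 2*4^t ≤ pos) (hpos2 : pos < 3*4^t)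
    (hcont : ∀ q, 2*4^t ≤ q → q < 3*4^t → (content e α t q = true ↔ q = pos)) :
    digs e α pos = true ∧
      ∀ q, 4^t ≤ q → q < 4^(t+1) → q ≠ pos → digs e α q = false := by
  constructor
  · rw [digs_content ht hpos1 hpos2]
    exact (hcont pos hpos1 hpos2).mpr rfl
  · intro q h1 h2 hne
    rcases Nat.lt_or_ge q (2*4^t) with h | h
    · exact digs_pad_front h1 h
    rcases Nat.lt_or_ge q (3*4^t) with h' | h'
    · rw [digs_content ht h h']
      rw [← Bool.not_eq_true]
      intro hq
      exact hne ((hcont q h h').mp hq)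
    · exact digs_pad_back h' h2

/-- a stage whose content is identically false -/
lemma digs_zero_block (ht : 1 ≤ t)
    (hcont : ∀ q, 2*4^t ≤ q → q < 3*4^t → content e α t q = false) :
    ∀ q, 4^t ≤ q → q < 4^(t+1) → digs e α q = false := by
  intro q h1 h2
  rcases Nat.lt_or_ge q (2*4^t) with h | h
  · exact digs_pad_front h1 h
  rcases Nat.lt_or_ge q (3*4^t) with h' | h'
  · rw [digs_content ht h h']; exact hcont q h h'
  · exact digs_pad_back h' h2

end Blocks

/-- a periodic orbit that stays below 1/2 is the fixed point 0 -/
lemma periodic_zero {p0 : ℝ} (hp : p0 ∈ Set.Icc (0:ℝ) 1) {kp : ℕ} (hkp : 0 < kp)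
    (hfix : tentMap^[kp] p0 = p0) (hlt : ∀ j, j < kp → tentMap^[j] p0 < 1/2) :
    p0 = 0 := by
  have hall : ∀ N, tentMap^[N] p0 < 1/2 := by
    intro N
    have hN : N = N % kp + kp * (N / kp) := by
      rw [Nat.mod_add_div]
    rw [hN, Function.iterate_add_apply, Function.iterate_mul,
      Function.iterate_fixed hfix]
    exact hlt _ (Nat.mod_lt _ hkp)
  have hpow : ∀ N, tentMap^[N] p0 = 2^N * p0 := by
    intro N
    induction N with
    | zero => simp
    | succ N ih =>
      rw [Function.iterate_succ_apply', ih,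
        tent_left (by nlinarith [pow_pos (by norm_num : (0:ℝ) < 2) N, hp.1])
          (by rw [← ih]; exact (hall N).le), pow_succ]
      ring
  have h2 := hpow kp
  rw [hfix] at h2
  have h2k : (2:ℝ)^kp ≥ 2 := by
    calc (2:ℝ)^kp ≥ 2^1 := pow_le_pow_right₀ (by norm_num) (by omega)
    _ = 2 := pow_one _
  nlinarith [hp.1]

/-! ### main frequently-lemmas -/

section Main
variable (e : ℕ → ℝ)

/-- same sequence, different shifts: orbits separate to distance 1 -/
lemma main_same (α : ℕ → Bool) {m n : ℕ} (hmn : m < n) (ε : ℝ) (hε : 0 < ε) (K : ℕ) :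
    ∃ k, K ≤ k ∧ 1 - ε ≤
      |tentMap^[k] (tentMap^[m] (ypt e α)) - tentMap^[k] (tentMap^[n] (ypt e α))| := by
  obtain ⟨N, hN⟩ := exists_pow_small (ε/4) (by linarith)
  obtain ⟨t, ht1, ht2⟩ := exists_stage (5 * Nat.pair 0 0 + 1) (K + n + N + 2)
  have hts : 3*t + 9 ≤ 4^t := pow4_big (by omega)
  have hlp : t ≤ 4^t := le_pow4 t
  have h4s : (4:ℕ)^(t+1) = 4 * 4^t := by rw [pow_succ]; omega
  obtain ⟨hone, hzero⟩ := digs_one_block (e := e) (α := α) (t := t) (by omega)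
    (pos := 2*4^t) (le_refl _) (by omega)
    (fun q h1 h2 => by rw [content_same ht2]; simp)
  have hx := tval_one (J := t+1) (by omega) hone
    (fun j hj1 hj2 => hzero (2*4^t+j) (by omega) (by omega) (by omega))
  have hy := tval_zero (b := digs e α) (p := 2*4^t + (n-m)) (J := t+1) (by omega)
    (fun j hj => hzero (2*4^t + (n-m) + j) (by omega) (by omega) (by omega))
  refine ⟨2*4^t + 1 - m, by omega, ?_⟩
  have e1 : tentMap^[2*4^t+1-m] (tentMap^[m] (ypt e α))
      = tentMap (Gb (digs e α) (2*4^t)) := orbit_formula e α (by omega)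
  have e2' : (2*4^t + (n-m)) + 1 - n = 2*4^t + 1 - m := by omega
  have e2 : tentMap^[2*4^t+1-m] (tentMap^[n] (ypt e α))
      = tentMap (Gb (digs e α) (2*4^t + (n-m))) := by
    rw [← e2']; exact orbit_formula e α (by omega)
  rw [e1, e2]
  have hsmall : (2⁻¹:ℝ)^(t+1) ≤ ε/4 := hN (t+1) (by omega)
  calc 1 - ε ≤ (1 - 2⁻¹^(t+1)) - 2*2⁻¹^(t+1) := by linarith
  _ ≤ tentMap (Gb (digs e α) (2*4^t)) - tentMap (Gb (digs e α) (2*4^t + (n-m))) := by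
      have := hx.1; have := hy.2; linarith
  _ ≤ |tentMap (Gb (digs e α) (2*4^t)) - tentMap (Gb (digs e α) (2*4^t + (n-m)))| :=
      le_abs_self _

/-- different sequences: orbits separate to distance 1 -/
lemma main_code (α β : ℕ → Bool) {j0 : ℕ} (hj : α j0 ≠ β j0) (m n : ℕ)
    (ε : ℝ) (hε : 0 < ε) (K : ℕ) :
    ∃ k, K ≤ k ∧ 1 - ε ≤
      |tentMap^[k] (tentMap^[m] (ypt e α)) - tentMap^[k] (tentMap^[n] (ypt e β))| := by
  obtain ⟨N, hN⟩ := exists_pow_small (ε/4) (by linarith)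
  obtain ⟨t, ht1, ht2⟩ := exists_stage (5 * Nat.pair j0 0 + 2) (K + n + m + N + 2)
  have hts : 3*t + 9 ≤ 4^t := pow4_big (by omega)
  have hlp : t ≤ 4^t := le_pow4 t
  have h4s : (4:ℕ)^(t+1) = 4 * 4^t := by rw [pow_succ]; omega
  -- position of the `1` for α and for β
  set pa := if α j0 then 3*4^t - 1 else 2*4^t with hpa
  set pb := if β j0 then 3*4^t - 1 else 2*4^t with hpb
  have hpane : pa ≠ pb := by
    rcases Bool.eq_false_or_eq_true (α j0) with h | h <;>
      rcases Bool.eq_false_or_eq_true (β j0) with h' | h' <;>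
        simp [hpa, hpb, h, h'] at hj ⊢ <;> omega
  have hpar : 2*4^t ≤ pa ∧ pa < 3*4^t := by
    rcases Bool.eq_false_or_eq_true (α j0) with h | h <;> simp [hpa, h] <;> omega
  have hpbr : 2*4^t ≤ pb ∧ pb < 3*4^t := by
    rcases Bool.eq_false_or_eq_true (β j0) with h | h <;> simp [hpb, h] <;> omega
  obtain ⟨hone, hzero⟩ := digs_one_block (e := e) (α := α) (t := t) (by omega)
    (pos := pa) hpar.1 hpar.2
    (fun q h1 h2 => by rw [content_code ht2]; simp [hpa])
  obtain ⟨honeb, hzerob⟩ := digs_one_block (e := e) (α := β) (t := t) (by omega)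
    (pos := pb) hpbr.1 hpbr.2
    (fun q h1 h2 => by rw [content_code ht2]; simp [hpb])
  -- key separation: |pa - pb| = 4^t - 1
  have hsep : (pa = 2*4^t ∧ pb = 3*4^t - 1) ∨ (pa = 3*4^t - 1 ∧ pb = 2*4^t) := by
    rcases Bool.eq_false_or_eq_true (α j0) with h | h <;>
      rcases Bool.eq_false_or_eq_true (β j0) with h' | h' <;>
        simp [hpa, hpb, h, h'] at hj ⊢
  have hx := tval_one (J := t+1) (by omega) hone
    (fun j hj1 hj2 => hzero (pa+j) (by omega) (by omega) (by omega))
  -- β window at position pa + n - m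
  set pbw := pa + n - m with hpbw
  have hy := tval_zero (b := digs e β) (p := pbw) (J := t+1) (by omega)
    (fun j hjlt => hzerob (pbw + j) (by omega) (by omega) (by omega))
  refine ⟨pa + 1 - m, by omega, ?_⟩
  have e1 : tentMap^[pa+1-m] (tentMap^[m] (ypt e α))
      = tentMap (Gb (digs e α) pa) := orbit_formula e α (by omega)
  have e2' : pbw + 1 - n = pa + 1 - m := by omega
  have e2 : tentMap^[pa+1-m] (tentMap^[n] (ypt e β))
      = tentMap (Gb (digs e β) pbw) := by
    rw [← e2']; exact orbit_formula e β (by omega)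
  rw [e1, e2]
  have hsmall : (2⁻¹:ℝ)^(t+1) ≤ ε/4 := hN (t+1) (by omega)
  calc 1 - ε ≤ (1 - 2⁻¹^(t+1)) - 2*2⁻¹^(t+1) := by linarith
  _ ≤ tentMap (Gb (digs e α) pa) - tentMap (Gb (digs e β) pbw) := by
      have := hx.1; have := hy.2; linarith
  _ ≤ |tentMap (Gb (digs e α) pa) - tentMap (Gb (digs e β) pbw)| := le_abs_self _

end Main

section Main2
variable (e : ℕ → ℝ)

/-- any two orbit points come arbitrarily close (back padding) -/
lemma main_liminf_pair (α β : ℕ → Bool) (m n : ℕ) (ε : ℝ) (hε : 0 < ε) (K : ℕ) :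
    ∃ k, K ≤ k ∧
      |tentMap^[k] (tentMap^[m] (ypt e α)) - tentMap^[k] (tentMap^[n] (ypt e β))| ≤ ε := by
  obtain ⟨N, hN⟩ := exists_pow_small ε hε
  set t := K + m + n + N + 2 with htdef
  have hts : 3*t + 9 ≤ 4^t := pow4_big (by omega)
  have hlp : t ≤ 4^t := le_pow4 t
  have h4s : (4:ℕ)^(t+1) = 4 * 4^t := by rw [pow_succ]; omega
  have hza : ∀ j, j < t+1 → digs e α (3*4^t + m + j) = false :=
    fun j hj => digs_pad_back (t := t) (by omega) (by omega)
  have hzb : ∀ j, j < t+1 → digs e β (3*4^t + n + j) = false :=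
    fun j hj => digs_pad_back (t := t) (by omega) (by omega)
  have hx := tval_zero (b := digs e α) (p := 3*4^t + m) (J := t+1) (by omega) hza
  have hy := tval_zero (b := digs e β) (p := 3*4^t + n) (J := t+1) (by omega) hzb
  refine ⟨3*4^t + 1, by omega, ?_⟩
  have e1' : (3*4^t + m) + 1 - m = 3*4^t + 1 := by omega
  have e1 : tentMap^[3*4^t+1] (tentMap^[m] (ypt e α))
      = tentMap (Gb (digs e α) (3*4^t + m)) := by
    rw [← e1']; exact orbit_formula e α (by omega)
  have e2' : (3*4^t + n) + 1 - n = 3*4^t + 1 := by omega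
  have e2 : tentMap^[3*4^t+1] (tentMap^[n] (ypt e β))
      = tentMap (Gb (digs e β) (3*4^t + n)) := by
    rw [← e2']; exact orbit_formula e β (by omega)
  rw [e1, e2]
  have hsmall : (2⁻¹:ℝ)^(t+1) ≤ ε := hN (t+1) (by omega)
  have hps : (2⁻¹:ℝ)^(t+1) = 2⁻¹^t * 2⁻¹ := pow_succ _ _
  have hsmall2 : (2⁻¹:ℝ)^t ≤ ε := hN t (by omega)
  have h1 := hx.1; have h2 := hx.2; have h3 := hy.1; have h4 := hy.2
  have hp : (0:ℝ) ≤ 2⁻¹^(t+1) := by positivity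
  rw [abs_le]
  constructor <;> nlinarith

/-- points of `X` get far from every orbit point -/
lemma main_far {u : ℕ} (he : e u ∈ Set.Icc (0:ℝ) 1) (α : ℕ → Bool) (m : ℕ)
    (ε : ℝ) (hε : 0 < ε) (K : ℕ) :
    ∃ k, K ≤ k ∧ 1/2 - ε ≤
      |tentMap^[k] (e u) - tentMap^[k] (tentMap^[m] (ypt e α))| := by
  obtain ⟨N, hN⟩ := exists_pow_small ε hε
  obtain ⟨t, ht1, ht2⟩ := exists_stage (5 * Nat.pair u m + 3) (K + m + N + 2)
  have hts : 3*t + 9 ≤ 4^t := pow4_big (by omega)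
  have hlp : t ≤ 4^t := le_pow4 t
  have h4s : (4:ℕ)^(t+1) = 4 * 4^t := by rw [pow_succ]; omega
  have hsmall : (2⁻¹:ℝ)^(t+1) ≤ ε := hN (t+1) (by omega)
  have hps : (2⁻¹:ℝ)^(t+1) = 2⁻¹^t * 2⁻¹ := pow_succ _ _
  have hsmall2 : (2⁻¹:ℝ)^t ≤ ε := hN t (by omega)
  have hp2 : (0:ℝ) ≤ 2⁻¹^(t+1) := by positivity
  have hxmem := tent_iter_mem he (2*4^t + 1 - m)
  refine ⟨2*4^t + 1 - m, by omega, ?_⟩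
  have e1 : tentMap^[2*4^t+1-m] (tentMap^[m] (ypt e α))
      = tentMap (Gb (digs e α) (2*4^t)) := orbit_formula e α (by omega)
  rw [e1]
  have hJ2 : (2⁻¹:ℝ)^(t+1) ≤ 2⁻¹ := by
    calc (2⁻¹:ℝ)^(t+1) ≤ 2⁻¹^1 := pow_le_pow_of_le_one (by norm_num) (by norm_num) (by omega)
    _ = 2⁻¹ := pow_one _
  by_cases hle : tentMap^[2*4^t + 1 - m] (e u) ≤ 1/2
  · obtain ⟨hone, hzero⟩ := digs_one_block (e := e) (α := α) (t := t) (by omega)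
      (pos := 2*4^t) (le_refl _) (by omega)
      (fun q h1 h2 => by
        rw [content_far ht2]
        simp only [Bool.and_eq_true, decide_eq_true_eq]
        exact ⟨fun h => h.1, fun h => ⟨h, by linarith⟩⟩)
    have hy := tval_one (J := t+1) (by omega) hone
      (fun j hj1 hj2 => hzero (2*4^t+j) (by omega) (by omega) (by omega))
    have h1 := hy.1
    rw [abs_sub_comm, abs_of_nonneg (by linarith)]
    linarith
  · push_neg at hle
    have hzero := digs_zero_block (e := e) (α := α) (t := t) (by omega)
      (fun q h1 h2 => by
        rw [content_far ht2]
        simp only [Bool.and_eq_false_iff]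
        right
        simpa using hle.not_ge)
    have hy := tval_zero (b := digs e α) (p := 2*4^t) (J := t+1) (by omega)
      (fun j hj => hzero (2*4^t+j) (by omega) (by omega))
    have h1 := hy.1; have h2 := hy.2
    have hJ1 : (2⁻¹:ℝ)^t ≤ 2⁻¹ := by
      calc (2⁻¹:ℝ)^t ≤ 2⁻¹^1 := pow_le_pow_of_le_one (by norm_num) (by norm_num) (by omega)
      _ = 2⁻¹ := pow_one _
    rw [abs_of_nonneg (by linarith)]
    linarith

/-- orbit points shadow points of `X` -/
lemma main_copy {u : ℕ} (he : e u ∈ Set.Icc (0:ℝ) 1) (α : ℕ → Bool) (m : ℕ)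
    (ε : ℝ) (hε : 0 < ε) (K : ℕ) :
    ∃ k, K ≤ k ∧
      |tentMap^[k] (e u) - tentMap^[k] (tentMap^[m] (ypt e α))| ≤ ε := by
  obtain ⟨N, hN⟩ := exists_pow_small (ε/4) (by linarith)
  obtain ⟨t, ht1, ht2⟩ := exists_stage (5 * Nat.pair u m + 4) (K + m + N + 2)
  have hts : 3*t + 9 ≤ 4^t := pow4_big (by omega)
  have hlp : t ≤ 4^t := le_pow4 t
  have h4s : (4:ℕ)^(t+1) = 4 * 4^t := by rw [pow_succ]; omega
  have hsmall : (2⁻¹:ℝ)^(t+1) ≤ ε/4 := hN (t+1) (by omega)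
  have hmatch : ∀ j, j < t+1 → digs e α (2*4^t + j) = xdig (e u) ((2*4^t - m) + j) := by
    intro j hj
    rw [digs_content (t := t) (by omega) (by omega) (by omega), content_copy ht2,
      show 2*4^t + j - m = (2*4^t - m) + j by omega]
  have hG := Gb_match (b := digs e α) (x := e u) (p := 2*4^t) (c := 2*4^t - m)
    (J := t+1) hmatch
  refine ⟨2*4^t + 1 - m, by omega, ?_⟩
  have e1 : tentMap^[2*4^t+1-m] (tentMap^[m] (ypt e α))
      = tentMap (Gb (digs e α) (2*4^t)) := orbit_formula e α (by omega)
  have e2 : tentMap^[2*4^t+1-m] (e u)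
      = tentMap (Int.fract (2^(2*4^t - m) * e u)) := by
    rw [show 2*4^t+1-m = (2*4^t-m)+1 by omega]
    exact tent_iter_formula he (2*4^t - m)
  rw [e1, e2]
  calc |tentMap (Int.fract (2^(2*4^t - m) * e u)) - tentMap (Gb (digs e α) (2*4^t))|
      ≤ 2 * |Int.fract (2^(2*4^t - m) * e u) - Gb (digs e α) (2*4^t)| := tent_lip _ _
  _ ≤ 2 * (2⁻¹^(t+1)) := by
      rw [abs_sub_comm]
      linarith [hG]
  _ ≤ ε := by linarith

/-- orbit points get far from periodic orbits -/
lemma main_periodic (α : ℕ → Bool) (m : ℕ) {p0 : ℝ} (hp0 : p0 ∈ Set.Icc (0:ℝ) 1)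
    {kp : ℕ} (hkp : 0 < kp) (hfix : tentMap^[kp] p0 = p0)
    (ε : ℝ) (hε : 0 < ε) (K : ℕ) :
    ∃ k, K ≤ k ∧ 1/2 - ε ≤
      |tentMap^[k] (tentMap^[m] (ypt e α)) - tentMap^[k] p0| := by
  obtain ⟨N, hN⟩ := exists_pow_small ε hε
  by_cases hall : ∀ j, j < kp → tentMap^[j] p0 < 1/2
  · -- p0 = 0
    have hp00 : p0 = 0 := periodic_zero hp0 hkp hfix hall
    have hT0 : tentMap (0:ℝ) = 0 := by norm_num [tentMap]
    obtain ⟨t, ht1, ht2⟩ := exists_stage (5 * Nat.pair 0 0 + 1) (K + m + N + 2)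
    have hts : 3*t + 9 ≤ 4^t := pow4_big (by omega)
    have hlp : t ≤ 4^t := le_pow4 t
    have h4s : (4:ℕ)^(t+1) = 4 * 4^t := by rw [pow_succ]; omega
    obtain ⟨hone, hzero⟩ := digs_one_block (e := e) (α := α) (t := t) (by omega)
      (pos := 2*4^t) (le_refl _) (by omega)
      (fun q h1 h2 => by rw [content_same ht2]; simp)
    have hx := tval_one (J := t+1) (by omega) hone
      (fun j hj1 hj2 => hzero (2*4^t+j) (by omega) (by omega) (by omega))
    refine ⟨2*4^t + 1 - m, by omega, ?_⟩
    have e1 : tentMap^[2*4^t+1-m] (tentMap^[m] (ypt e α))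
        = tentMap (Gb (digs e α) (2*4^t)) := orbit_formula e α (by omega)
    rw [e1, hp00, Function.iterate_fixed hT0]
    have h1 := hx.1
    have hJ2 : (2⁻¹:ℝ)^(t+1) ≤ 2⁻¹ := by
      calc (2⁻¹:ℝ)^(t+1) ≤ 2⁻¹^1 := pow_le_pow_of_le_one (by norm_num) (by norm_num) (by omega)
      _ = 2⁻¹ := pow_one _
    rw [sub_zero, abs_of_nonneg (by linarith)]
    linarith
  · push_neg at hall
    obtain ⟨j0, hj0lt, hj0⟩ := hall
    set t := K + m + kp + N + 2 with htdef
    have hts : 3*t + 9 ≤ 4^t := pow4_big (by omega)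
    have hlp : t ≤ 4^t := le_pow4 t
    have h4s : (4:ℕ)^(t+1) = 4 * 4^t := by rw [pow_succ]; omega
    obtain ⟨k, hk1, hk2, l, hl⟩ := exists_mod hkp j0 (3*4^t + 1) (by omega)
    have hpk : tentMap^[k] p0 = tentMap^[j0] p0 := by
      rw [hl, Function.iterate_add_apply, Function.iterate_mul,
        Function.iterate_fixed hfix]
    set pos := k + m - 1 with hpos
    have hz : ∀ j, j < t+1 → digs e α (pos + j) = false :=
      fun j hj => digs_pad_back (t := t) (by omega) (by omega)
    have hy := tval_zero (b := digs e α) (p := pos) (J := t+1) (by omega) hz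
    refine ⟨k, by omega, ?_⟩
    have e1 : tentMap^[k] (tentMap^[m] (ypt e α))
        = tentMap (Gb (digs e α) pos) := by
      rw [show k = pos + 1 - m by omega]
      exact orbit_formula e α (by omega)
    rw [e1, hpk]
    have h1 := hy.1; have h2 := hy.2
    have hpmem := tent_iter_mem hp0 j0
    have hsmall : (2⁻¹:ℝ)^(t+1) ≤ ε := hN (t+1) (by omega)
    have hps : (2⁻¹:ℝ)^(t+1) = 2⁻¹^t * 2⁻¹ := pow_succ _ _
    have hsmall2 : (2⁻¹:ℝ)^t ≤ ε := hN t (by omega)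
    have hp2 : (0:ℝ) ≤ 2⁻¹ ^ (t+1) := by positivity
    have hJ1 : (2⁻¹:ℝ)^t ≤ 2⁻¹ := by
      calc (2⁻¹:ℝ)^t ≤ 2⁻¹^1 := pow_le_pow_of_le_one (by norm_num) (by norm_num) (by omega)
      _ = 2⁻¹ := pow_one _
    rw [abs_sub_comm, abs_of_nonneg (by linarith)]
    linarith

/-- every orbit point has dense orbit -/
lemma main_trans (α : ℕ → Bool) (m : ℕ) {z : ℝ} (hz : z ∈ Set.Icc (0:ℝ) 1)
    (ε : ℝ) (hε : 0 < ε) :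
    ∃ k, |tentMap^[k] (tentMap^[m] (ypt e α)) - z| ≤ ε := by
  obtain ⟨r, hr⟩ := exists_pow_small (ε/8) (by linarith)
  have hrr : (2⁻¹:ℝ)^r ≤ ε/8 := hr r (le_refl _)
  set w : ℝ := 2^r * (z/2) with hw
  have hw0 : 0 ≤ w := by
    rw [hw]
    have := hz.1
    positivity
  set a : ℕ := (⌊w⌋).toNat with ha
  have hfl0 : (0:ℤ) ≤ ⌊w⌋ := Int.floor_nonneg.mpr hw0
  have hacast : (a:ℝ) = ((⌊w⌋ : ℤ) : ℝ) := by
    rw [ha]; exact_mod_cast Int.toNat_of_nonneg hfl0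
  set x0 : ℝ := (a:ℝ) / 2^r with hx0
  have hpr : (0:ℝ) < 2^r := by positivity
  have hfl1 : ((⌊w⌋:ℤ):ℝ) ≤ w := Int.floor_le w
  have hfl2 : w - 1 < ((⌊w⌋:ℤ):ℝ) := by
    have := Int.lt_floor_add_one w
    linarith
  have hinv : ((2:ℝ)^r)⁻¹ = 2⁻¹^r := by
    rw [← inv_pow]
  have hx0le : x0 ≤ z/2 := by
    rw [hx0, div_le_iff₀ hpr, hacast, hw] at *
    linarith
  have hx0ge : z/2 - 2⁻¹^r ≤ x0 := by
    rw [hx0, le_div_iff₀ hpr, hacast]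
    have h2 : (z/2 - 2⁻¹^r) * 2^r = w - 2⁻¹^r * 2^r := by rw [hw]; ring
    have h3 : (2⁻¹:ℝ)^r * 2^r = 1 := by
      rw [← mul_pow]; norm_num
    rw [h2, h3]
    linarith
  have hx00 : 0 ≤ x0 := by rw [hx0]; positivity
  have hx0half : x0 ≤ 1/2 := le_trans hx0le (by linarith [hz.2])
  -- choose stage
  obtain ⟨t, ht1, ht2⟩ := exists_stage (5 * Nat.pair (Nat.pair a r) 0 + 0) (m + r + 2)
  have hts : 3*t + 9 ≤ 4^t := pow4_big (by omega)
  have hlp : t ≤ 4^t := le_pow4 t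
  have h4s : (4:ℕ)^(t+1) = 4 * 4^t := by rw [pow_succ]; omega
  have hmatch : ∀ j, j < t+1 → digs e α (2*4^t + j) = xdig x0 (0 + j) := by
    intro j hj
    rw [digs_content (t := t) (by omega) (by omega) (by omega), content_trans ht2,
      Nat.unpair_pair, show 2*4^t + j - 2*4^t = 0 + j by omega]
  have hG := Gb_match (b := digs e α) (x := x0) (p := 2*4^t) (c := 0) (J := t+1) hmatch
  have hfract : Int.fract ((2:ℝ)^0 * x0) = x0 := by
    rw [pow_zero, one_mul]
    exact Int.fract_eq_self.mpr ⟨hx00, by linarith⟩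
  rw [hfract] at hG
  refine ⟨2*4^t + 1 - m, ?_⟩
  have e1 : tentMap^[2*4^t+1-m] (tentMap^[m] (ypt e α))
      = tentMap (Gb (digs e α) (2*4^t)) := orbit_formula e α (by omega)
  rw [e1]
  have htl := tent_lip (Gb (digs e α) (2*4^t)) x0
  have htx0 : tentMap x0 = 2 * x0 := tent_left hx00 hx0half
  have hsm : (2⁻¹:ℝ)^(t+1) ≤ ε/8 := hr (t+1) (by omega)
  have habs : |Gb (digs e α) (2*4^t) - x0| ≤ 2⁻¹^(t+1) := hG
  calc |tentMap (Gb (digs e α) (2*4^t)) - z|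
      ≤ |tentMap (Gb (digs e α) (2*4^t)) - tentMap x0| + |tentMap x0 - z| := abs_sub_le _ _ _
  _ ≤ 2 * 2⁻¹^(t+1) + |tentMap x0 - z| := by linarith
  _ ≤ 2 * 2⁻¹^(t+1) + 2 * 2⁻¹^r := by
      have : |tentMap x0 - z| ≤ 2 * 2⁻¹^r := by
        rw [htx0, abs_le]
        constructor <;> linarith
      linarith
  _ ≤ ε := by linarith

end Main2

/-- The scrambled set. -/
def YSet (e : ℕ → ℝ) : Set ℝ := {w | ∃ α : ℕ → Bool, ∃ m : ℕ, w = tentMap^[m] (ypt e α)}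

lemma abs_diff_le_one {x y : ℝ} (hx : x ∈ Set.Icc (0:ℝ) 1) (hy : y ∈ Set.Icc (0:ℝ) 1)
    (k : ℕ) : |tentMap^[k] x - tentMap^[k] y| ≤ 1 := by
  have h1 := tent_iter_mem hx k
  have h2 := tent_iter_mem hy k
  rw [abs_le]
  constructor <;> [linarith [h1.1, h2.2]; linarith [h1.2, h2.1]]

lemma not_countable_funs : ¬ (Set.univ : Set (ℕ → Bool)).Countable := by
  rw [Set.countable_univ_iff]
  intro h
  classical
  have hc : Countable (Set ℕ) := by
    have hinj : Function.Injective (fun (s : Set ℕ) (n : ℕ) => decide (n ∈ s)) := by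
      intro s t hst; ext n; simpa using congrFun hst n
    exact hinj.countable
  obtain ⟨f, hf⟩ := (countable_iff_exists_injective (Set ℕ)).mp hc
  exact Function.cantor_injective (fun s => f s) hf

end TentAux

open TentAux in
/-- For any countably infinite subset `X` of `[0,1]` there exists a dense,
uncountable, `T`-invariant 1-scrambled set `Y` of transitive points in `[0,1]`
such that for every `x ∈ X` and `y ∈ Y`, `limsup |Tⁿx - Tⁿy| ≥ 1/2` and
`liminf |Tⁿx - Tⁿy| = 0`. -/
theorem tent_scrambled_set_avoiding_countable_set
    (X : Set ℝ) (hXsub : X ⊆ Set.Icc 0 1) (hXc : X.Countable) (hXi : X.Infinite) :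
    ∃ Y : Set ℝ,
      Y ⊆ Set.Icc (0 : ℝ) 1 ∧
      Set.Icc (0 : ℝ) 1 ⊆ closure Y ∧
      ¬ Y.Countable ∧
      tentMap '' Y ⊆ Y ∧
      (∀ x ∈ Y, ∀ y ∈ Y, x ≠ y →
        1 ≤ limsup (fun n => |tentMap^[n] x - tentMap^[n] y|) atTop ∧
        liminf (fun n => |tentMap^[n] x - tentMap^[n] y|) atTop = 0) ∧
      (∀ x ∈ Y, ∀ p ∈ Set.Icc (0 : ℝ) 1, (∃ k : ℕ, 0 < k ∧ tentMap^[k] p = p) →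
        (1 : ℝ) / 2 ≤ limsup (fun n => |tentMap^[n] x - tentMap^[n] p|) atTop) ∧
      (∀ y ∈ Y, Set.Icc (0 : ℝ) 1 ⊆ closure (Set.range fun n => tentMap^[n] y)) ∧
      (∀ x ∈ X, ∀ y ∈ Y,
        (1 : ℝ) / 2 ≤ limsup (fun n => |tentMap^[n] x - tentMap^[n] y|) atTop ∧
        liminf (fun n => |tentMap^[n] x - tentMap^[n] y|) atTop = 0) := by
  obtain ⟨e, he⟩ := hXc.exists_eq_range hXi.nonempty
  have hemem : ∀ i, e i ∈ Set.Icc (0:ℝ) 1 := fun i => hXsub (he ▸ Set.mem_range_self i)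
  have hYmem : ∀ w ∈ YSet e, w ∈ Set.Icc (0:ℝ) 1 := by
    rintro w ⟨α, m, rfl⟩
    exact tent_iter_mem (ypt_mem e α) m
  -- transitivity of every point of Y
  have htrans : ∀ y ∈ YSet e, Set.Icc (0 : ℝ) 1 ⊆ closure (Set.range fun n => tentMap^[n] y) := by
    rintro w ⟨α, m, rfl⟩ z hz
    rw [Metric.mem_closure_iff]
    intro δ hδ
    obtain ⟨k, hk⟩ := main_trans e α m hz (δ/2) (by linarith)
    refine ⟨tentMap^[k] (tentMap^[m] (ypt e α)), ⟨k, rfl⟩, ?_⟩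
    rw [Real.dist_eq, abs_sub_comm]
    linarith
  refine ⟨YSet e, hYmem, ?_, ?_, ?_, ?_, ?_, htrans, ?_⟩
  · -- density
    have hy0 : ypt e (fun _ => false) ∈ YSet e := ⟨fun _ => false, 0, rfl⟩
    refine (htrans _ hy0).trans (closure_mono ?_)
    rintro w ⟨n, rfl⟩
    exact ⟨fun _ => false, n, rfl⟩
  · -- uncountable
    intro hY
    have hinj : Function.Injective (fun α : ℕ → Bool => ypt e α) := by
      intro α β hab
      by_contra hne
      obtain ⟨j0, hj0⟩ := Function.ne_iff.mp hne
      obtain ⟨k, _, hk⟩ := main_code e α β hj0 0 0 (1/2) (by norm_num) 0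
      simp only [Function.iterate_zero_apply] at hk
      have hab' : ypt e α = ypt e β := hab
      rw [hab'] at hk
      simp at hk
      norm_num at hk
    have hsub : (fun α : ℕ → Bool => ypt e α) ⁻¹' (YSet e) = Set.univ := by
      ext α
      simp only [Set.mem_preimage, Set.mem_univ, iff_true]
      exact ⟨α, 0, rfl⟩
    have := (hY.preimage hinj)
    rw [hsub] at this
    exact not_countable_funs this
  · -- invariance
    rintro w ⟨w0, ⟨α, m, rfl⟩, rfl⟩
    exact ⟨α, m+1, by rw [Function.iterate_succ_apply']⟩
  · -- scrambled pairs
    rintro x ⟨α, m, rfl⟩ y ⟨β, n, rfl⟩ hne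
    constructor
    · apply limsup_ge_of_freq
      · exact fun k => abs_diff_le_one (tent_iter_mem (ypt_mem e α) m)
          (tent_iter_mem (ypt_mem e β) n) k
      · intro ε hε K
        by_cases hab : α = β
        · subst hab
          have hmn : m ≠ n := fun h => hne (by rw [h])
          rcases Nat.lt_or_ge m n with h | h
          · exact main_same e α h ε hε K
          · obtain ⟨k, hk1, hk2⟩ := main_same e α (by omega : n < m) ε hε K
            exact ⟨k, hk1, by rwa [abs_sub_comm] at hk2⟩
        · obtain ⟨j0, hj0⟩ := Function.ne_iff.mp hab
          exact main_code e α β hj0 m n ε hε K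
    · apply liminf_eq_zero_of_freq
      · exact fun k => abs_nonneg _
      · exact fun k => abs_diff_le_one (tent_iter_mem (ypt_mem e α) m)
          (tent_iter_mem (ypt_mem e β) n) k
      · exact fun ε hε K => main_liminf_pair e α β m n ε hε K
  · -- periodic points
    rintro x ⟨α, m, rfl⟩ p0 hp0 ⟨kp, hkp, hfix⟩
    apply limsup_ge_of_freq
    · exact fun k => abs_diff_le_one (tent_iter_mem (ypt_mem e α) m) hp0 k
    · intro ε hε K
      exact main_periodic e α m hp0 hkp hfix ε hε K
  · -- avoidance of X
    rintro x hx y ⟨α, m, rfl⟩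
    obtain ⟨i, rfl⟩ : ∃ i, e i = x := by
      rw [he] at hx
      obtain ⟨i, hi⟩ := hx
      exact ⟨i, hi⟩
    constructor
    · apply limsup_ge_of_freq
      · exact fun k => abs_diff_le_one (hemem i) (tent_iter_mem (ypt_mem e α) m) k
      · intro ε hε K
        exact main_far e (hemem i) α m ε hε K
    · apply liminf_eq_zero_of_freq
      · exact fun k => abs_nonneg _
      · exact fun k => abs_diff_le_one (hemem i) (tent_iter_mem (ypt_mem e α) m) k
      · exact fun ε hε K => main_copy e (hemem i) α m ε hε K
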